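/- Let $\lambda_1, \ldots, \lambda_m \in \mathbb{C}^*$ be pairwise distinct and let $V(\eta,\epsilon,\theta)$ be an irreducible highest weight module over the affine-Virasoro algebra $\mathfrak{L}$ of type $A_1$. Then for any nonzero $v \in V(\eta,\epsilon,\theta)$, the element $1 \otimes \cdots \otimes 1 \otimes v$ generates the tensor product module $\mathbf{T}^M = (\otimes_{k=1}^m M(\lambda_k,\alpha_k,\beta_k,\gamma_k)) \otimes V(\eta,\epsilon,\theta)$ as an $\mathfrak{L}$-module. -/

import Mathlib

open MvPolynomial TensorProduct

/-- `ℂ[s₁,…,s_m,t₁,…,t_m]`: the variable `(k,0)` is `s_k` and `(k,1)` is `t_k`. -/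
noncomputable abbrev PP (m : ℕ) : Type := MvPolynomial (Fin m × Fin 2) ℂ

/-- Substitution `g ↦ g(…, s_k - i, t_k + a, …)` acting only on the `k`-th pair of
variables. -/
noncomputable def subm (m : ℕ) (k : Fin m) (i : ℤ) (a : ℂ) : PP m →ₐ[ℂ] PP m :=
  aeval fun w => if w = (k, 0) then X w - MvPolynomial.C (i : ℂ)
    else if w = (k, 1) then X w + MvPolynomial.C a else X w

/-- The action of `e_i` on the `k`-th tensor factor `M(λ_k,α_k,β_k,γ_k)`, where
`Mt = 0, 1, 2` selects `M = Ω, Δ, Θ` respectively. -/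
noncomputable def facE (m : ℕ) (Mt : Fin 3) (lam alp bet : Fin m → ℂ) (k : Fin m) (i : ℤ) :
    PP m →ₗ[ℂ] PP m :=
  if Mt = 0 then ((lam k) ^ i * alp k) • (subm m k i (-2)).toLinearMap
  else if Mt = 1 then (-((lam k) ^ i / alp k)) •
    (LinearMap.mulLeft ℂ ((MvPolynomial.C (1/2 : ℂ) * X (k, 1) + MvPolynomial.C (bet k)) *
        (MvPolynomial.C (1/2 : ℂ) * X (k, 1) - MvPolynomial.C (bet k) - 1)) ∘ₗ
      (subm m k i (-2)).toLinearMap)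
  else ((lam k) ^ i * alp k) •
    (LinearMap.mulLeft ℂ (MvPolynomial.C (1/2 : ℂ) * X (k, 1) + MvPolynomial.C (bet k)) ∘ₗ
      (subm m k i (-2)).toLinearMap)

/-- The action of `f_i` on the `k`-th tensor factor. -/
noncomputable def facF (m : ℕ) (Mt : Fin 3) (lam alp bet : Fin m → ℂ) (k : Fin m) (i : ℤ) :
    PP m →ₗ[ℂ] PP m :=
  if Mt = 0 then (-((lam k) ^ i / alp k)) •
    (LinearMap.mulLeft ℂ ((MvPolynomial.C (1/2 : ℂ) * X (k, 1) - MvPolynomial.C (bet k)) *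
        (MvPolynomial.C (1/2 : ℂ) * X (k, 1) + MvPolynomial.C (bet k) + 1)) ∘ₗ
      (subm m k i 2).toLinearMap)
  else if Mt = 1 then ((lam k) ^ i * alp k) • (subm m k i 2).toLinearMap
  else (-((lam k) ^ i / alp k)) •
    (LinearMap.mulLeft ℂ (MvPolynomial.C (1/2 : ℂ) * X (k, 1) - MvPolynomial.C (bet k)) ∘ₗ
      (subm m k i 2).toLinearMap)

/-- The action of `h_i` on the `k`-th tensor factor. -/
noncomputable def facH (m : ℕ) (lam : Fin m → ℂ) (k : Fin m) (i : ℤ) : PP m →ₗ[ℂ] PP m :=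
  (lam k) ^ i • (LinearMap.mulLeft ℂ (X (k, 1)) ∘ₗ (subm m k i 0).toLinearMap)

/-- The action of `d_i` on the `k`-th tensor factor. -/
noncomputable def facD (m : ℕ) (lam gam : Fin m → ℂ) (k : Fin m) (i : ℤ) :
    PP m →ₗ[ℂ] PP m :=
  (lam k) ^ i • (LinearMap.mulLeft ℂ (X (k, 0) + MvPolynomial.C ((i : ℂ) * gam k)) ∘ₗ
    (subm m k i 0).toLinearMap)

/-- The diagonal action of `e_i` on `⊗_{k=1}^m M(λ_k,α_k,β_k,γ_k) ⊗ V`. -/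
noncomputable def tenE (m : ℕ) (Mt : Fin 3) (lam alp bet : Fin m → ℂ)
    {V : Type*} [AddCommGroup V] [Module ℂ V] (Ev : ℤ → V →ₗ[ℂ] V) (i : ℤ) :
    PP m ⊗[ℂ] V →ₗ[ℂ] PP m ⊗[ℂ] V :=
  TensorProduct.map (∑ k : Fin m, facE m Mt lam alp bet k i) LinearMap.id +
    TensorProduct.map LinearMap.id (Ev i)

/-- The diagonal action of `f_i`. -/
noncomputable def tenF (m : ℕ) (Mt : Fin 3) (lam alp bet : Fin m → ℂ)
    {V : Type*} [AddCommGroup V] [Module ℂ V] (Fv : ℤ → V →ₗ[ℂ] V) (i : ℤ) :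
    PP m ⊗[ℂ] V →ₗ[ℂ] PP m ⊗[ℂ] V :=
  TensorProduct.map (∑ k : Fin m, facF m Mt lam alp bet k i) LinearMap.id +
    TensorProduct.map LinearMap.id (Fv i)

/-- The diagonal action of `h_i`. -/
noncomputable def tenH (m : ℕ) (lam : Fin m → ℂ)
    {V : Type*} [AddCommGroup V] [Module ℂ V] (Hv : ℤ → V →ₗ[ℂ] V) (i : ℤ) :
    PP m ⊗[ℂ] V →ₗ[ℂ] PP m ⊗[ℂ] V :=
  TensorProduct.map (∑ k : Fin m, facH m lam k i) LinearMap.id +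
    TensorProduct.map LinearMap.id (Hv i)

/-- The diagonal action of `d_i`. -/
noncomputable def tenD (m : ℕ) (lam gam : Fin m → ℂ)
    {V : Type*} [AddCommGroup V] [Module ℂ V] (Dv : ℤ → V →ₗ[ℂ] V) (i : ℤ) :
    PP m ⊗[ℂ] V →ₗ[ℂ] PP m ⊗[ℂ] V :=
  TensorProduct.map (∑ k : Fin m, facD m lam gam k i) LinearMap.id +
    TensorProduct.map LinearMap.id (Dv i)

/-- The diagonal action of the central element `C` (it acts by `0` on each polynomial
factor). -/
noncomputable def tenC (m : ℕ) {V : Type*} [AddCommGroup V] [Module ℂ V]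
    (Cv : V →ₗ[ℂ] V) : PP m ⊗[ℂ] V →ₗ[ℂ] PP m ⊗[ℂ] V :=
  TensorProduct.map LinearMap.id Cv

/-- A family of operators on `V` defines an action of the affine-Virasoro algebra of type
`A₁` (all defining bracket relations hold as commutators). -/
def IsAVAction {V : Type*} [AddCommGroup V] [Module ℂ V]
    (Ev Fv Hv Dv : ℤ → V →ₗ[ℂ] V) (Cv : V →ₗ[ℂ] V) : Prop :=
  (∀ i j : ℤ, Ev i ∘ₗ Fv j - Fv j ∘ₗ Ev i =
    Hv (i + j) + (if i + j = 0 then (i : ℂ) else 0) • Cv) ∧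
  (∀ i j : ℤ, Hv i ∘ₗ Ev j - Ev j ∘ₗ Hv i = (2 : ℂ) • Ev (i + j)) ∧
  (∀ i j : ℤ, Hv i ∘ₗ Fv j - Fv j ∘ₗ Hv i = (-2 : ℂ) • Fv (i + j)) ∧
  (∀ i j : ℤ, Dv i ∘ₗ Dv j - Dv j ∘ₗ Dv i = ((j : ℂ) - (i : ℂ)) • Dv (i + j) +
    (if i + j = 0 then ((i : ℂ) ^ 3 - (i : ℂ)) / 12 else 0) • Cv) ∧
  (∀ i j : ℤ, Dv i ∘ₗ Hv j - Hv j ∘ₗ Dv i = (j : ℂ) • Hv (i + j)) ∧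
  (∀ i j : ℤ, Hv i ∘ₗ Hv j - Hv j ∘ₗ Hv i = (if i + j = 0 then (-2 * (i : ℂ)) else 0) • Cv) ∧
  (∀ i j : ℤ, Dv i ∘ₗ Ev j - Ev j ∘ₗ Dv i = (j : ℂ) • Ev (i + j)) ∧
  (∀ i j : ℤ, Dv i ∘ₗ Fv j - Fv j ∘ₗ Dv i = (j : ℂ) • Fv (i + j)) ∧
  (∀ i j : ℤ, Ev i ∘ₗ Ev j = Ev j ∘ₗ Ev i) ∧
  (∀ i j : ℤ, Fv i ∘ₗ Fv j = Fv j ∘ₗ Fv i) ∧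
  (∀ i : ℤ, Ev i ∘ₗ Cv = Cv ∘ₗ Ev i ∧ Fv i ∘ₗ Cv = Cv ∘ₗ Fv i ∧
    Hv i ∘ₗ Cv = Cv ∘ₗ Hv i ∧ Dv i ∘ₗ Cv = Cv ∘ₗ Dv i)

/-- A subspace of `V` stable under all operators. -/
def VStable {V : Type*} [AddCommGroup V] [Module ℂ V]
    (Ev Fv Hv Dv : ℤ → V →ₗ[ℂ] V) (Cv : V →ₗ[ℂ] V) (U : Submodule ℂ V) : Prop :=
  ∀ i : ℤ, ∀ v ∈ U, Ev i v ∈ U ∧ Fv i v ∈ U ∧ Hv i v ∈ U ∧ Dv i v ∈ U ∧ Cv v ∈ U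

/-- `V`, with the given operators, is an irreducible highest weight module of highest weight
`(η, ε, θ)` over the affine-Virasoro algebra of type `A₁`. -/
def IsIrrHW (V : Type*) [AddCommGroup V] [Module ℂ V] (eta eps th : ℂ)
    (Ev Fv Hv Dv : ℤ → V →ₗ[ℂ] V) (Cv : V →ₗ[ℂ] V) : Prop :=
  IsAVAction Ev Fv Hv Dv Cv ∧ Cv = th • LinearMap.id ∧
  (∃ v0 : V, v0 ≠ 0 ∧
    (∀ i : ℤ, 1 ≤ i → Ev i v0 = 0 ∧ Fv i v0 = 0 ∧ Hv i v0 = 0 ∧ Dv i v0 = 0) ∧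
    Ev 0 v0 = 0 ∧ Dv 0 v0 = eta • v0 ∧ Hv 0 v0 = eps • v0 ∧ Cv v0 = th • v0 ∧
    (∀ U : Submodule ℂ V, VStable Ev Fv Hv Dv Cv U → v0 ∈ U → U = ⊤)) ∧
  (∀ U : Submodule ℂ V, VStable Ev Fv Hv Dv Cv U → U = ⊥ ∨ U = ⊤)

section AuxPoly

lemma poly_zero_of_int_eval (p : Polynomial ℂ) (N : ℤ)
    (h : ∀ i : ℤ, N ≤ i → p.eval (i : ℂ) = 0) : p = 0 := by
  apply Polynomial.eq_zero_of_infinite_isRoot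
  apply Set.Infinite.mono (s := (fun i : ℤ => (i : ℂ)) '' Set.Ici N)
  · rintro x ⟨i, hi, rfl⟩; exact h i hi
  · exact (Set.Ici_infinite N).image (Set.injOn_of_injective Int.cast_injective)

lemma natDegree_shift_sub_le (p : Polynomial ℂ) (d : ℕ) (hd : p.natDegree ≤ d + 1) :
    (p.comp (Polynomial.X + Polynomial.C 1) - p).natDegree ≤ d := by
  by_cases h0 : p.comp (Polynomial.X + Polynomial.C 1) - p = 0
  · rw [h0]; simp
  have hp : p ≠ 0 := by rintro rfl; simp at h0
  have hdeg : (p.comp (Polynomial.X + Polynomial.C 1)).natDegree = p.natDegree := by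
    simp only [Polynomial.natDegree_comp, Polynomial.natDegree_X_add_C, mul_one]
  have hlc : (p.comp (Polynomial.X + Polynomial.C 1)).leadingCoeff = p.leadingCoeff := by
    rw [Polynomial.leadingCoeff_comp (by rw [Polynomial.natDegree_X_add_C]; exact one_ne_zero)]
    simp only [Polynomial.leadingCoeff_X_add_C, one_pow, mul_one]
  have hcomp0 : p.comp (Polynomial.X + Polynomial.C 1) ≠ 0 := by
    intro h; rw [← Polynomial.leadingCoeff_eq_zero, hlc, Polynomial.leadingCoeff_eq_zero] at h
    exact hp h
  have hlt : (p.comp (Polynomial.X + Polynomial.C 1) - p).degree < (p.comp (Polynomial.X + Polynomial.C 1)).degree := by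
    apply Polynomial.degree_sub_lt _ hcomp0 hlc
    rw [Polynomial.degree_eq_natDegree hcomp0, Polynomial.degree_eq_natDegree hp, hdeg]
  have := Polynomial.natDegree_lt_natDegree h0 hlt
  omega

lemma exp_poly_aux (m : ℕ) :
    ∀ (lam : Fin m → ℂ), (∀ k, lam k ≠ 0) → Function.Injective lam →
    ∀ (N : ℤ) (p : Fin m → Polynomial ℂ),
      (∀ i : ℤ, N ≤ i → ∑ k, (p k).eval (i : ℂ) * lam k ^ i = 0) →
      ∀ k, p k = 0 := by
  induction m with
  | zero => intro _ _ _ _ _ _ k; exact k.elim0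
  | succ m ih =>
    intro lam hne hinj N
    suffices H : ∀ d : ℕ, ∀ p : Fin (m+1) → Polynomial ℂ,
        (p (Fin.last m)).natDegree ≤ d →
        (∀ i : ℤ, N ≤ i → ∑ k, (p k).eval (i : ℂ) * lam k ^ i = 0) → ∀ k, p k = 0 by
      intro p hp; exact H (p (Fin.last m)).natDegree p le_rfl hp
    have hlam_ne : ∀ k : Fin m, lam k.castSucc ≠ lam (Fin.last m) := by
      intro k h
      exact absurd (hinj h) (Fin.ne_of_lt (Fin.castSucc_lt_last k))
    have hq_sys : ∀ p : Fin (m+1) → Polynomial ℂ,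
        (∀ i : ℤ, N ≤ i → ∑ k, (p k).eval (i : ℂ) * lam k ^ i = 0) →
        (∀ i : ℤ, N ≤ i → ∑ k, ((lam k • (p k).comp (Polynomial.X + Polynomial.C 1) -
            lam (Fin.last m) • p k).eval (i : ℂ)) * lam k ^ i = 0) := by
      intro p hp i hi
      have h1 := hp (i + 1) (by omega)
      have h0 := hp i hi
      have : ∀ k : Fin (m+1),
          ((lam k • (p k).comp (Polynomial.X + Polynomial.C 1) - lam (Fin.last m) • p k).eval (i : ℂ)) * lam k ^ i
          = (p k).eval ((i + 1 : ℤ) : ℂ) * lam k ^ (i + 1)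
            - lam (Fin.last m) * ((p k).eval (i : ℂ) * lam k ^ i) := by
        intro k
        rw [zpow_add_one₀ (hne k)]
        push_cast
        simp only [Polynomial.eval_sub, Polynomial.eval_smul, Polynomial.eval_comp,
          Polynomial.eval_add, Polynomial.eval_X, Polynomial.eval_C, smul_eq_mul]
        ring
      rw [Finset.sum_congr rfl (fun k _ => this k), Finset.sum_sub_distrib, h1,
        ← Finset.mul_sum, h0]
      ring
    have hlc_step : ∀ (pk : Polynomial ℂ) (k : Fin m),
        lam k.castSucc • pk.comp (Polynomial.X + Polynomial.C 1) - lam (Fin.last m) • pk = 0 → pk = 0 := by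
      intro pk k h
      by_contra hpk
      have hcomp : (pk.comp (Polynomial.X + Polynomial.C 1)).leadingCoeff = pk.leadingCoeff := by
        rw [Polynomial.leadingCoeff_comp (by rw [Polynomial.natDegree_X_add_C]; exact one_ne_zero)]
        simp only [Polynomial.leadingCoeff_X_add_C, one_pow, mul_one]
      have hdeg : (pk.comp (Polynomial.X + Polynomial.C 1)).natDegree = pk.natDegree := by
        simp only [Polynomial.natDegree_comp, Polynomial.natDegree_X_add_C, mul_one]
      have heq : lam k.castSucc • pk.comp (Polynomial.X + Polynomial.C 1) = lam (Fin.last m) • pk := by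
        rwa [sub_eq_zero] at h
      have := congrArg Polynomial.leadingCoeff heq
      simp only [Polynomial.smul_eq_C_mul, Polynomial.leadingCoeff_mul,
        Polynomial.leadingCoeff_C, hcomp] at this
      have hlc0 : pk.leadingCoeff ≠ 0 := fun h' => hpk (Polynomial.leadingCoeff_eq_zero.mp h')
      exact hlam_ne k (mul_right_cancel₀ hlc0 this)
    intro d
    induction d with
    | zero =>
      intro p hdeg hp
      obtain ⟨c, hc⟩ := Polynomial.natDegree_eq_zero.mp (Nat.le_zero.mp hdeg)
      have hqlast : lam (Fin.last m) • (p (Fin.last m)).comp (Polynomial.X + Polynomial.C 1)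
          - lam (Fin.last m) • p (Fin.last m) = 0 := by
        rw [← hc]; simp
      have hsys := hq_sys p hp
      have hqzero : ∀ k : Fin m, lam k.castSucc • (p k.castSucc).comp (Polynomial.X + Polynomial.C 1)
          - lam (Fin.last m) • p k.castSucc = 0 := by
        apply ih (fun k => lam k.castSucc) (fun k => hne _)
          (fun a b h => Fin.castSucc_injective m (hinj h)) N
          (fun k => lam k.castSucc • (p k.castSucc).comp (Polynomial.X + Polynomial.C 1)
          - lam (Fin.last m) • p k.castSucc)
        intro i hi
        have := hsys i hi
        rwa [Fin.sum_univ_castSucc, hqlast, Polynomial.eval_zero, zero_mul, add_zero] at this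
      have hpcast : ∀ k : Fin m, p k.castSucc = 0 := fun k => hlc_step _ k (hqzero k)
      intro k
      refine Fin.lastCases ?_ (fun k' => hpcast k') k
      have : ∀ i : ℤ, N ≤ i → (p (Fin.last m)).eval (i : ℂ) = 0 := by
        intro i hi
        have := hp i hi
        rw [Fin.sum_univ_castSucc] at this
        rw [Finset.sum_congr rfl (fun k' _ => by rw [hpcast k', Polynomial.eval_zero, zero_mul]),
          Finset.sum_const_zero, zero_add] at this
        exact (mul_eq_zero.mp this).resolve_right (zpow_ne_zero i (hne _))
      exact poly_zero_of_int_eval _ N this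
    | succ d ihd =>
      intro p hdeg hp
      have hqlast_deg : ((fun k => lam k • (p k).comp (Polynomial.X + Polynomial.C 1) - lam (Fin.last m) • p k)
          (Fin.last m)).natDegree ≤ d := by
        show (lam (Fin.last m) • (p (Fin.last m)).comp (Polynomial.X + Polynomial.C 1)
          - lam (Fin.last m) • p (Fin.last m)).natDegree ≤ d
        rw [← smul_sub]
        calc (lam (Fin.last m) • ((p (Fin.last m)).comp (Polynomial.X + Polynomial.C 1) - p (Fin.last m))).natDegree
            ≤ ((p (Fin.last m)).comp (Polynomial.X + Polynomial.C 1) - p (Fin.last m)).natDegree :=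
              Polynomial.natDegree_smul_le _ _
          _ ≤ d := natDegree_shift_sub_le _ d hdeg
      have hqzero := ihd (fun k => lam k • (p k).comp (Polynomial.X + Polynomial.C 1) - lam (Fin.last m) • p k)
        hqlast_deg (hq_sys p hp)
      have hpcast : ∀ k : Fin m, p k.castSucc = 0 := fun k => hlc_step _ k (hqzero _)
      intro k
      refine Fin.lastCases ?_ (fun k' => hpcast k') k
      have : ∀ i : ℤ, N ≤ i → (p (Fin.last m)).eval (i : ℂ) = 0 := by
        intro i hi
        have := hp i hi
        rw [Fin.sum_univ_castSucc] at this
        rw [Finset.sum_congr rfl (fun k' _ => by rw [hpcast k', Polynomial.eval_zero, zero_mul]),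
          Finset.sum_const_zero, zero_add] at this
        exact (mul_eq_zero.mp this).resolve_right (zpow_ne_zero i (hne _))
      exact poly_zero_of_int_eval _ N this

lemma extract_mem {E : Type*} [AddCommGroup E] [Module ℂ E] (U : Submodule ℂ E)
    {m : ℕ} (lam : Fin m → ℂ) (hne : ∀ k, lam k ≠ 0) (hinj : Function.Injective lam)
    (N : ℤ) (R : ℕ) (w : Fin m → ℕ → E)
    (h : ∀ i : ℤ, N ≤ i →
      (∑ k, ∑ j ∈ Finset.range R, (((i : ℂ)) ^ j * lam k ^ i) • w k j) ∈ U) :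
    ∀ k, ∀ j < R, w k j ∈ U := by
  intro k0 j0 hj0
  have hq : ∀ i : ℤ, N ≤ i →
      ∑ k, ∑ j ∈ Finset.range R, (((i : ℂ)) ^ j * lam k ^ i) • U.mkQ (w k j) = 0 := by
    intro i hi
    have h' := h i hi
    rw [← Submodule.Quotient.mk_eq_zero (p := U)] at h'
    rw [← h']
    simp [← Submodule.mkQ_apply, map_sum, map_smul]
  have hzero : U.mkQ (w k0 j0) = 0 := by
    rw [← Module.forall_dual_apply_eq_zero_iff ℂ]
    intro φ
    have hp := exp_poly_aux m lam hne hinj N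
      (fun k => ∑ j ∈ Finset.range R, Polynomial.C (φ (U.mkQ (w k j))) * Polynomial.X ^ j)
      ?_ k0
    · have := congrArg (fun q => Polynomial.coeff q j0) hp
      simpa [Polynomial.finset_sum_coeff, Polynomial.coeff_C_mul, Polynomial.coeff_X_pow,
        Finset.sum_ite_eq' (Finset.range R), hj0] using this
    · intro i hi
      have := congrArg φ (hq i hi)
      rw [map_sum, map_zero] at this
      rw [← this]
      apply Finset.sum_congr rfl
      intro k _
      rw [map_sum]
      simp [Polynomial.eval_finset_sum, Finset.sum_mul]
      ring_nf
      apply Finset.sum_congr rfl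
      intro j _
      ring
  rwa [Submodule.mkQ_apply, Submodule.Quotient.mk_eq_zero] at hzero

end AuxPoly

section AuxSubm

noncomputable def PhiP (m : ℕ) (k : Fin m) (a : ℂ) : PP m →ₐ[ℂ] Polynomial (PP m) :=
  aeval fun w => if w = (k, 0) then Polynomial.C (X w) - Polynomial.X
    else if w = (k, 1) then Polynomial.C (X w + MvPolynomial.C a) else Polynomial.C (X w)

lemma subm_eq_aeval (m : ℕ) (k : Fin m) (i : ℤ) (a : ℂ) (p : PP m) :
    subm m k i a p = Polynomial.aeval (MvPolynomial.C (i : ℂ) : PP m) (PhiP m k a p) := by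
  have hh : (subm m k i a) =
      (((Polynomial.aeval (MvPolynomial.C (i : ℂ) : PP m)).restrictScalars ℂ).comp
        (PhiP m k a)) := by
    apply MvPolynomial.algHom_ext
    intro w
    simp only [subm, PhiP, MvPolynomial.aeval_X, AlgHom.coe_comp, AlgHom.coe_restrictScalars',
      Function.comp_apply]
    split_ifs <;> simp
  rw [hh]; rfl

lemma subm_expand (m : ℕ) (k : Fin m) (a : ℂ) (p : PP m) (R : ℕ)
    (hR : (PhiP m k a p).natDegree < R) (i : ℤ) :
    subm m k i a p = ∑ j ∈ Finset.range R, ((i : ℂ)) ^ j • (PhiP m k a p).coeff j := by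
  rw [subm_eq_aeval, Polynomial.aeval_eq_sum_range' hR]
  apply Finset.sum_congr rfl
  intro j _
  rw [smul_eq_mul, ← MvPolynomial.C_pow, mul_comm, ← MvPolynomial.smul_eq_C_mul]

lemma subm_zero (m : ℕ) (k : Fin m) (p : PP m) : subm m k 0 0 p = p := by
  have hh : subm m k (0 : ℤ) (0 : ℂ) = AlgHom.id ℂ (PP m) := by
    apply MvPolynomial.algHom_ext
    intro w
    simp only [subm, MvPolynomial.aeval_X, AlgHom.coe_id, id_eq]
    split_ifs <;> simp
  rw [hh]; rfl

lemma PhiP_coeff_zero (m : ℕ) (k : Fin m) (p : PP m) : (PhiP m k 0 p).coeff 0 = p := by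
  have h := subm_eq_aeval m k 0 0 p
  rw [subm_zero] at h
  rw [Polynomial.coeff_zero_eq_eval_zero]
  have : Polynomial.aeval (MvPolynomial.C ((0 : ℤ) : ℂ) : PP m) (PhiP m k 0 p)
      = (PhiP m k 0 p).eval 0 := by
    rw [Int.cast_zero, map_zero]
    rw [Polynomial.aeval_def, ← Polynomial.eval_map, Algebra.algebraMap_self, Polynomial.map_id]
  rw [← this, ← h]

lemma facH_expand (m : ℕ) (lam : Fin m → ℂ) (k : Fin m) (i : ℤ) (R : ℕ) (p : PP m)
    (hR : (PhiP m k 0 p).natDegree < R) :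
    facH m lam k i p = ∑ j ∈ Finset.range R,
      (((i : ℂ)) ^ j * lam k ^ i) • (X (k, 1) * (PhiP m k 0 p).coeff j) := by
  simp only [facH, LinearMap.smul_apply, LinearMap.coe_comp, Function.comp_apply,
    AlgHom.toLinearMap_apply, LinearMap.mulLeft_apply]
  rw [subm_expand m k 0 p R hR i, Finset.mul_sum, Finset.smul_sum]
  apply Finset.sum_congr rfl
  intro j _
  rw [mul_smul_comm, smul_smul, mul_comm]

lemma facD_expand (m : ℕ) (lam gam : Fin m → ℂ) (k : Fin m) (i : ℤ) (R : ℕ) (p : PP m)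
    (hR : (PhiP m k 0 p).natDegree < R) :
    facD m lam gam k i p = ∑ j ∈ Finset.range (R + 1),
      (((i : ℂ)) ^ j * lam k ^ i) •
        (X (k, 0) * (PhiP m k 0 p).coeff j +
          gam k • (if j = 0 then 0 else (PhiP m k 0 p).coeff (j - 1))) := by
  have hcR : (PhiP m k 0 p).coeff R = 0 :=
    Polynomial.coeff_eq_zero_of_natDegree_lt hR
  simp only [facD, LinearMap.smul_apply, LinearMap.coe_comp, Function.comp_apply,
    AlgHom.toLinearMap_apply, LinearMap.mulLeft_apply]
  rw [subm_expand m k 0 p R hR i]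
  rw [show (∑ j ∈ Finset.range (R + 1),
      (((i : ℂ)) ^ j * lam k ^ i) •
        (X (k, 0) * (PhiP m k 0 p).coeff j +
          gam k • (if j = 0 then 0 else (PhiP m k 0 p).coeff (j - 1))))
      = (∑ j ∈ Finset.range (R + 1),
          (((i : ℂ)) ^ j * lam k ^ i) • (X (k, 0) * (PhiP m k 0 p).coeff j))
        + (∑ j ∈ Finset.range (R + 1),
          (((i : ℂ)) ^ j * lam k ^ i) •
            (gam k • (if j = 0 then 0 else (PhiP m k 0 p).coeff (j - 1)))) by
    rw [← Finset.sum_add_distrib]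
    exact Finset.sum_congr rfl fun j _ => smul_add _ _ _]
  rw [Finset.sum_range_succ, hcR, mul_zero, smul_zero, add_zero]
  rw [Finset.sum_range_succ']
  simp only [Nat.add_sub_cancel, if_neg (Nat.succ_ne_zero _), if_pos rfl, if_true, smul_zero,
    add_zero, pow_zero, one_mul]
  rw [add_mul, Finset.mul_sum, Finset.mul_sum, smul_add, Finset.smul_sum, Finset.smul_sum]
  congr 1
  · apply Finset.sum_congr rfl
    intro j _
    rw [mul_smul_comm, smul_smul, mul_comm]
  · apply Finset.sum_congr rfl
    intro j _
    rw [← MvPolynomial.smul_eq_C_mul, smul_smul, smul_smul, smul_smul]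
    congr 1
    ring

end AuxSubm

lemma hw_vanish {V : Type*} [AddCommGroup V] [Module ℂ V]
    (Ev Fv Hv Dv : ℤ → V →ₗ[ℂ] V) (Cv : V →ₗ[ℂ] V) (eta eps th : ℂ)
    (hV : IsIrrHW V eta eps th Ev Fv Hv Dv Cv) :
    ∀ v : V, ∃ N : ℤ, 1 ≤ N ∧ ∀ i : ℤ, N ≤ i →
      Ev i v = 0 ∧ Fv i v = 0 ∧ Hv i v = 0 ∧ Dv i v = 0 := by
  obtain ⟨hact, hCth, ⟨v0, hv0ne, hv0pos, hv0e0, hv0d0, hv0h0, hv0c0, hv0gen⟩, hirr⟩ := hV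
  obtain ⟨rEF, rHE, rHF, rDD, rDH, rHH, rDE, rDF, rEE, rFF, rCC⟩ := hact
  have aprel₁ : ∀ (A B R : V →ₗ[ℂ] V), A ∘ₗ B - B ∘ₗ A = R → ∀ x, A (B x) = B (A x) + R x := by
    intro A B R hR x
    have := DFunLike.congr_fun hR x
    simp only [LinearMap.sub_apply, LinearMap.comp_apply] at this
    have := sub_eq_iff_eq_add.mp this
    rw [this]
    rw [add_comm]
  have aprel₂ : ∀ (A B R : V →ₗ[ℂ] V), A ∘ₗ B - B ∘ₗ A = R → ∀ x, B (A x) = A (B x) - R x := by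
    intro A B R hR x
    have h1 := aprel₁ A B R hR x
    rw [h1]
    abel
  set U : Submodule ℂ V := {
    carrier := {w | ∃ N : ℤ, 1 ≤ N ∧ ∀ i : ℤ, N ≤ i →
      Ev i w = 0 ∧ Fv i w = 0 ∧ Hv i w = 0 ∧ Dv i w = 0}
    add_mem' := by
      rintro a b ⟨Na, h1a, ha⟩ ⟨Nb, h1b, hb⟩
      refine ⟨max Na Nb, le_trans h1a (le_max_left _ _), fun i hi => ?_⟩
      have ha' := ha i (le_trans (le_max_left _ _) hi)
      have hb' := hb i (le_trans (le_max_right _ _) hi)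
      simp [map_add, ha'.1, ha'.2.1, ha'.2.2.1, ha'.2.2.2, hb'.1, hb'.2.1, hb'.2.2.1, hb'.2.2.2]
    zero_mem' := ⟨1, le_refl 1, fun i _ => by simp⟩
    smul_mem' := by
      rintro c a ⟨Na, h1a, ha⟩
      refine ⟨Na, h1a, fun i hi => ?_⟩
      have ha' := ha i hi
      simp [map_smul, ha'.1, ha'.2.1, ha'.2.2.1, ha'.2.2.2] } with hUdef
  have hmemU : ∀ w : V, w ∈ U ↔ (∃ N : ℤ, 1 ≤ N ∧ ∀ i : ℤ, N ≤ i →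
      Ev i w = 0 ∧ Fv i w = 0 ∧ Hv i w = 0 ∧ Dv i w = 0) := fun w => Iff.rfl
  have hstable : VStable Ev Fv Hv Dv Cv U := by
    intro j w hw
    obtain ⟨Nw, hNw1, h⟩ := (hmemU w).mp hw
    have habs1 : j ≤ |j| := le_abs_self j
    have habs2 : -j ≤ |j| := neg_le_abs j
    refine ⟨?_, ?_, ?_, ?_, ?_⟩
    · refine (hmemU _).mpr ⟨Nw + |j| + 1, by omega, fun i hi => ?_⟩
      have hiN : Nw ≤ i := by omega
      refine ⟨?_, ?_, ?_, ?_⟩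
      · have hc := DFunLike.congr_fun (rEE i j) w
        simp only [LinearMap.comp_apply] at hc
        rw [hc, (h i hiN).1, map_zero]
      · have hc := aprel₂ _ _ _ (rEF j i) w
        rw [hc, (h i hiN).2.1, map_zero]
        simp only [LinearMap.add_apply, LinearMap.smul_apply]
        rw [(h (j+i) (by omega)).2.2.1, if_neg (show ¬ j + i = 0 by omega)]
        simp
      · have hc := aprel₁ _ _ _ (rHE i j) w
        rw [hc, (h i hiN).2.2.1, map_zero]
        simp only [LinearMap.smul_apply]
        rw [(h (i+j) (by omega)).1]
        simp
      · have hc := aprel₁ _ _ _ (rDE i j) w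
        rw [hc, (h i hiN).2.2.2, map_zero]
        simp only [LinearMap.smul_apply]
        rw [(h (i+j) (by omega)).1]
        simp
    · refine (hmemU _).mpr ⟨Nw + |j| + 1, by omega, fun i hi => ?_⟩
      have hiN : Nw ≤ i := by omega
      refine ⟨?_, ?_, ?_, ?_⟩
      · have hc := aprel₁ _ _ _ (rEF i j) w
        rw [hc, (h i hiN).1, map_zero]
        simp only [LinearMap.add_apply, LinearMap.smul_apply]
        rw [(h (i+j) (by omega)).2.2.1, if_neg (show ¬ i + j = 0 by omega)]
        simp
      · have hc := DFunLike.congr_fun (rFF i j) w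
        simp only [LinearMap.comp_apply] at hc
        rw [hc, (h i hiN).2.1, map_zero]
      · have hc := aprel₁ _ _ _ (rHF i j) w
        rw [hc, (h i hiN).2.2.1, map_zero]
        simp only [LinearMap.smul_apply]
        rw [(h (i+j) (by omega)).2.1]
        simp
      · have hc := aprel₁ _ _ _ (rDF i j) w
        rw [hc, (h i hiN).2.2.2, map_zero]
        simp only [LinearMap.smul_apply]
        rw [(h (i+j) (by omega)).2.1]
        simp
    · refine (hmemU _).mpr ⟨Nw + |j| + 1, by omega, fun i hi => ?_⟩
      have hiN : Nw ≤ i := by omega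
      refine ⟨?_, ?_, ?_, ?_⟩
      · have hc := aprel₂ _ _ _ (rHE j i) w
        rw [hc, (h i hiN).1, map_zero]
        simp only [LinearMap.smul_apply]
        rw [(h (j+i) (by omega)).1]
        simp
      · have hc := aprel₂ _ _ _ (rHF j i) w
        rw [hc, (h i hiN).2.1, map_zero]
        simp only [LinearMap.smul_apply]
        rw [(h (j+i) (by omega)).2.1]
        simp
      · have hc := aprel₁ _ _ _ (rHH i j) w
        rw [hc, (h i hiN).2.2.1, map_zero]
        simp only [LinearMap.smul_apply]
        rw [if_neg (show ¬ i + j = 0 by omega)]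
        simp
      · have hc := aprel₁ _ _ _ (rDH i j) w
        rw [hc, (h i hiN).2.2.2, map_zero]
        simp only [LinearMap.smul_apply]
        rw [(h (i+j) (by omega)).2.2.1]
        simp
    · refine (hmemU _).mpr ⟨Nw + |j| + 1, by omega, fun i hi => ?_⟩
      have hiN : Nw ≤ i := by omega
      refine ⟨?_, ?_, ?_, ?_⟩
      · have hc := aprel₂ _ _ _ (rDE j i) w
        rw [hc, (h i hiN).1, map_zero]
        simp only [LinearMap.smul_apply]
        rw [(h (j+i) (by omega)).1]
        simp
      · have hc := aprel₂ _ _ _ (rDF j i) w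
        rw [hc, (h i hiN).2.1, map_zero]
        simp only [LinearMap.smul_apply]
        rw [(h (j+i) (by omega)).2.1]
        simp
      · have hc := aprel₂ _ _ _ (rDH j i) w
        rw [hc, (h i hiN).2.2.1, map_zero]
        simp only [LinearMap.smul_apply]
        rw [(h (j+i) (by omega)).2.2.1]
        simp
      · have hc := aprel₁ _ _ _ (rDD i j) w
        rw [hc, (h i hiN).2.2.2, map_zero]
        simp only [LinearMap.add_apply, LinearMap.smul_apply]
        rw [(h (i+j) (by omega)).2.2.2, if_neg (show ¬ i + j = 0 by omega)]
        simp
    · rw [hCth]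
      simp only [LinearMap.smul_apply, LinearMap.id_apply]
      exact U.smul_mem th hw
  have hUtop : U = ⊤ := hv0gen U hstable ((hmemU v0).mpr ⟨1, le_refl 1, fun i hi => hv0pos i hi⟩)
  intro v
  exact (hmemU v).mp (hUtop ▸ Submodule.mem_top)


/-- For pairwise distinct nonzero `λ_k` and any irreducible highest weight module
`V(η,ε,θ)`, the element `1 ⊗ ⋯ ⊗ 1 ⊗ v` generates the tensor product module
`𝐓^M = (⊗_{k=1}^m M(λ_k,α_k,β_k,γ_k)) ⊗ V(η,ε,θ)` for any nonzero `v`. -/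

theorem stmt15 (m : ℕ) (hm : 0 < m) (Mt : Fin 3) (lam alp bet gam : Fin m → ℂ)
    (hlam0 : ∀ k, lam k ≠ 0) (hinj : Function.Injective lam) (halp : ∀ k, alp k ≠ 0)
    (hbet : Mt = 2 → ∀ k, ¬ ∃ n : ℕ, 2 * bet k = (n : ℂ))
    (V : Type*) [AddCommGroup V] [Module ℂ V]
    (Ev Fv Hv Dv : ℤ → V →ₗ[ℂ] V) (Cv : V →ₗ[ℂ] V) (eta eps th : ℂ)
    (hV : IsIrrHW V eta eps th Ev Fv Hv Dv Cv)
    (v : V) (hv : v ≠ 0) (W : Submodule ℂ (PP m ⊗[ℂ] V))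
    (hstab : ∀ i : ℤ, ∀ x ∈ W, tenE m Mt lam alp bet Ev i x ∈ W ∧
      tenF m Mt lam alp bet Fv i x ∈ W ∧ tenH m lam Hv i x ∈ W ∧
      tenD m lam gam Dv i x ∈ W ∧ tenC m Cv x ∈ W)
    (hmem : (1 : PP m) ⊗ₜ[ℂ] v ∈ W) :
    W = ⊤ := by
  classical
  obtain ⟨N, hN1, hNv⟩ := hw_vanish Ev Fv Hv Dv Cv eta eps th hV v
  have hirr := hV.2.2.2
  -- Step 1: multiplying by t_k preserves membership
  have stepH : ∀ p : PP m, p ⊗ₜ[ℂ] v ∈ W → ∀ k0 : Fin m,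
      (X (k0, 1) * p) ⊗ₜ[ℂ] v ∈ W := by
    intro p hp k0
    set R : ℕ := 1 + Finset.univ.sup (fun k : Fin m => (PhiP m k 0 p).natDegree) with hRdef
    have hRk : ∀ k : Fin m, (PhiP m k 0 p).natDegree < R := by
      intro k
      have hle := Finset.le_sup (f := fun k : Fin m => (PhiP m k 0 p).natDegree)
        (Finset.mem_univ k)
      exact lt_of_le_of_lt hle (by omega)
    have key : ∀ i : ℤ, N ≤ i →
        (∑ k, ∑ j ∈ Finset.range R, (((i : ℂ)) ^ j * lam k ^ i) •
          ((X (k, 1) * (PhiP m k 0 p).coeff j) ⊗ₜ[ℂ] v)) ∈ W := by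
      intro i hi
      have h1 := (hstab i _ hp).2.2.1
      have heq : tenH m lam Hv i (p ⊗ₜ[ℂ] v)
          = ∑ k, ∑ j ∈ Finset.range R, (((i : ℂ)) ^ j * lam k ^ i) •
              ((X (k, 1) * (PhiP m k 0 p).coeff j) ⊗ₜ[ℂ] v) := by
        simp only [tenH, LinearMap.add_apply, TensorProduct.map_tmul, LinearMap.id_coe, id_eq]
        rw [(hNv i hi).2.2.1, tmul_zero, add_zero, LinearMap.sum_apply,
          TensorProduct.sum_tmul]
        apply Finset.sum_congr rfl
        intro k _
        rw [facH_expand m lam k i R p (hRk k), TensorProduct.sum_tmul]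
        exact Finset.sum_congr rfl fun j _ => (TensorProduct.smul_tmul' _ _ _).symm
      rw [← heq]; exact h1
    have hext := extract_mem W lam hlam0 hinj N R _ key k0 0 (by omega)
    rwa [PhiP_coeff_zero] at hext
  -- Step 2: multiplying by s_k preserves membership
  have stepD : ∀ p : PP m, p ⊗ₜ[ℂ] v ∈ W → ∀ k0 : Fin m,
      (X (k0, 0) * p) ⊗ₜ[ℂ] v ∈ W := by
    intro p hp k0
    set R : ℕ := 1 + Finset.univ.sup (fun k : Fin m => (PhiP m k 0 p).natDegree) with hRdef
    have hRk : ∀ k : Fin m, (PhiP m k 0 p).natDegree < R := by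
      intro k
      have hle := Finset.le_sup (f := fun k : Fin m => (PhiP m k 0 p).natDegree)
        (Finset.mem_univ k)
      exact lt_of_le_of_lt hle (by omega)
    have key : ∀ i : ℤ, N ≤ i →
        (∑ k, ∑ j ∈ Finset.range (R + 1), (((i : ℂ)) ^ j * lam k ^ i) •
          ((X (k, 0) * (PhiP m k 0 p).coeff j +
            gam k • (if j = 0 then 0 else (PhiP m k 0 p).coeff (j - 1))) ⊗ₜ[ℂ] v)) ∈ W := by
      intro i hi
      have h1 := (hstab i _ hp).2.2.2.1
      have heq : tenD m lam gam Dv i (p ⊗ₜ[ℂ] v)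
          = ∑ k, ∑ j ∈ Finset.range (R + 1), (((i : ℂ)) ^ j * lam k ^ i) •
              ((X (k, 0) * (PhiP m k 0 p).coeff j +
                gam k • (if j = 0 then 0 else (PhiP m k 0 p).coeff (j - 1))) ⊗ₜ[ℂ] v) := by
        simp only [tenD, LinearMap.add_apply, TensorProduct.map_tmul, LinearMap.id_coe, id_eq]
        rw [(hNv i hi).2.2.2, tmul_zero, add_zero, LinearMap.sum_apply,
          TensorProduct.sum_tmul]
        apply Finset.sum_congr rfl
        intro k _
        rw [facD_expand m lam gam k i R p (hRk k), TensorProduct.sum_tmul]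
        exact Finset.sum_congr rfl fun j _ => (TensorProduct.smul_tmul' _ _ _).symm
      rw [← heq]; exact h1
    have hext := extract_mem W lam hlam0 hinj N (R + 1) _ key k0 0 (by omega)
    rw [if_pos rfl, smul_zero, add_zero, PhiP_coeff_zero] at hext
    exact hext
  -- Step 3: every polynomial tensor v is in W
  have hall : ∀ p : PP m, p ⊗ₜ[ℂ] v ∈ W := by
    intro p
    induction p using MvPolynomial.induction_on with
    | C a =>
      have : (MvPolynomial.C a : PP m) ⊗ₜ[ℂ] v = a • ((1 : PP m) ⊗ₜ[ℂ] v) := by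
        rw [TensorProduct.smul_tmul']
        congr 1
        rw [MvPolynomial.smul_eq_C_mul, mul_one]
      rw [this]; exact W.smul_mem a hmem
    | add p q hp hq => rw [TensorProduct.add_tmul]; exact W.add_mem hp hq
    | mul_X p w hp =>
      obtain ⟨k, b⟩ := w
      fin_cases b
      · rw [mul_comm]; exact stepD p hp k
      · rw [mul_comm]; exact stepH p hp k
  -- Step 4: the set of w with all p ⊗ w in W is a stable submodule of V
  set V' : Submodule ℂ V := {
    carrier := {w : V | ∀ p : PP m, p ⊗ₜ[ℂ] w ∈ W}
    add_mem' := fun ha hb p => by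
      rw [TensorProduct.tmul_add]; exact W.add_mem (ha p) (hb p)
    zero_mem' := fun p => by rw [TensorProduct.tmul_zero]; exact W.zero_mem
    smul_mem' := fun c a ha p => by
      rw [TensorProduct.tmul_smul]; exact W.smul_mem c (ha p) } with hV'def
  have hmemV' : ∀ w : V, w ∈ V' ↔ ∀ p : PP m, p ⊗ₜ[ℂ] w ∈ W := fun w => Iff.rfl
  have hV'stable : VStable Ev Fv Hv Dv Cv V' := by
    intro i w hw
    have hw' := (hmemV' w).mp hw
    refine ⟨?_, ?_, ?_, ?_, ?_⟩
    · refine (hmemV' _).mpr fun p => ?_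
      have h1 := (hstab i _ (hw' p)).1
      have h2 : ((∑ k, facE m Mt lam alp bet k i) p) ⊗ₜ[ℂ] w ∈ W := hw' _
      have heq : p ⊗ₜ[ℂ] Ev i w = tenE m Mt lam alp bet Ev i (p ⊗ₜ[ℂ] w)
          - ((∑ k, facE m Mt lam alp bet k i) p) ⊗ₜ[ℂ] w := by
        simp only [tenE, LinearMap.add_apply, TensorProduct.map_tmul, LinearMap.id_coe, id_eq]
        rw [add_sub_cancel_left]
      rw [heq]; exact W.sub_mem h1 h2
    · refine (hmemV' _).mpr fun p => ?_
      have h1 := (hstab i _ (hw' p)).2.1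
      have h2 : ((∑ k, facF m Mt lam alp bet k i) p) ⊗ₜ[ℂ] w ∈ W := hw' _
      have heq : p ⊗ₜ[ℂ] Fv i w = tenF m Mt lam alp bet Fv i (p ⊗ₜ[ℂ] w)
          - ((∑ k, facF m Mt lam alp bet k i) p) ⊗ₜ[ℂ] w := by
        simp only [tenF, LinearMap.add_apply, TensorProduct.map_tmul, LinearMap.id_coe, id_eq]
        rw [add_sub_cancel_left]
      rw [heq]; exact W.sub_mem h1 h2
    · refine (hmemV' _).mpr fun p => ?_
      have h1 := (hstab i _ (hw' p)).2.2.1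
      have h2 : ((∑ k, facH m lam k i) p) ⊗ₜ[ℂ] w ∈ W := hw' _
      have heq : p ⊗ₜ[ℂ] Hv i w = tenH m lam Hv i (p ⊗ₜ[ℂ] w)
          - ((∑ k, facH m lam k i) p) ⊗ₜ[ℂ] w := by
        simp only [tenH, LinearMap.add_apply, TensorProduct.map_tmul, LinearMap.id_coe, id_eq]
        rw [add_sub_cancel_left]
      rw [heq]; exact W.sub_mem h1 h2
    · refine (hmemV' _).mpr fun p => ?_
      have h1 := (hstab i _ (hw' p)).2.2.2.1
      have h2 : ((∑ k, facD m lam gam k i) p) ⊗ₜ[ℂ] w ∈ W := hw' _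
      have heq : p ⊗ₜ[ℂ] Dv i w = tenD m lam gam Dv i (p ⊗ₜ[ℂ] w)
          - ((∑ k, facD m lam gam k i) p) ⊗ₜ[ℂ] w := by
        simp only [tenD, LinearMap.add_apply, TensorProduct.map_tmul, LinearMap.id_coe, id_eq]
        rw [add_sub_cancel_left]
      rw [heq]; exact W.sub_mem h1 h2
    · refine (hmemV' _).mpr fun p => ?_
      have h1 := (hstab 0 _ (hw' p)).2.2.2.2
      have heq : p ⊗ₜ[ℂ] Cv w = tenC m Cv (p ⊗ₜ[ℂ] w) := by
        simp only [tenC, TensorProduct.map_tmul, LinearMap.id_coe, id_eq]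
      rw [heq]; exact h1
  have hvV' : v ∈ V' := (hmemV' v).mpr hall
  have hV'top : V' = ⊤ := by
    rcases hirr V' hV'stable with hbot | htop
    · exfalso
      apply hv
      rw [hbot] at hvV'
      simpa using hvV'
    · exact htop
  apply eq_top_iff.mpr
  rw [← TensorProduct.span_tmul_eq_top ℂ (PP m) V, Submodule.span_le]
  rintro x ⟨p, w, rfl⟩
  exact ((hmemV' w).mp (hV'top ▸ Submodule.mem_top)) p
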